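/- arXiv:0711.4949 — 3 statements merged into one kernel-verified Lean document; each statement's English description precedes it below -/
import Mathlib

section
/- Let A be a unital C*-algebra and p, q projections in A with ‖qp − pq‖ < ε < 1/4. Then there exists a projection q̃ ∈ A with ‖q̃ − q‖ < 3ε and q̃p = pq̃. -/
section AuxCStar

variable {A : Type*}

noncomputable def conjSAH [NormedRing A] [StarRing A] [NormedAlgebra ℂ A]
    (u : A) (h1 : u * u = 1) (hu : star u = u) : A →⋆ₐ[ℂ] A where
  toFun a := u * a * u
  map_one' := by show u * 1 * u = 1; rw [mul_one, h1]
  map_mul' a b := by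
    show u * (a * b) * u = u * a * u * (u * b * u)
    have h : u * a * u * (u * b * u) = u * a * (u * u) * (b * u) := by noncomm_ring
    rw [h, h1]
    noncomm_ring
  map_zero' := by simp
  map_add' a b := by show u * (a + b) * u = _; noncomm_ring
  commutes' r := by
    show u * algebraMap ℂ A r * u = algebraMap ℂ A r
    rw [Algebra.algebraMap_eq_smul_one, mul_smul_comm, mul_one, smul_mul_assoc, h1]
  map_star' a := by show u * star a * u = star (u * a * u); simp [star_mul, hu, mul_assoc]

@[simp] lemma conjSAH_apply [NormedRing A] [StarRing A] [NormedAlgebra ℂ A]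
    (u : A) (h1 : u * u = 1) (hu : star u = u) (a : A) :
    conjSAH u h1 hu a = u * a * u := rfl

lemma conjSAH_cont [NormedRing A] [StarRing A] [NormedAlgebra ℂ A]
    (u : A) (h1 : u * u = 1) (hu : star u = u) : Continuous (conjSAH u h1 hu) := by
  show Continuous fun a : A => u * a * u
  fun_prop

lemma corner_le [NormedRing A] [StarRing A] [CStarRing A]
    [NormedAlgebra ℂ A] [StarModule ℂ A] [CompleteSpace A]
    [PartialOrder A] [StarOrderedRing A]
    (e y : A) (he : star e = e) (hy : IsSelfAdjoint y) (hyey : e * y * e = y)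
    {r : ℝ} (hr : ‖y‖ ≤ r) : y ≤ r • (e * e) := by
  letI : CStarAlgebra A := ⟨⟩
  have h1 : y ≤ algebraMap ℝ A r := by
    by_cases nontriv : Nontrivial A
    · refine le_algebraMap_of_spectrum_le fun z hz => ?_
      calc z ≤ ‖z‖ := Real.le_norm_self z
        _ ≤ ‖y‖ := spectrum.norm_le_norm_of_mem hz
        _ ≤ r := hr
    · rw [not_nontrivial_iff_subsingleton] at nontriv
      exact le_of_eq (Subsingleton.elim _ _)
  calc y = star e * y * e := by rw [he, hyey]
    _ ≤ star e * algebraMap ℝ A r * e := star_left_conjugate_le_conjugate h1 e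
    _ = r • (e * e) := by
        rw [he, Algebra.algebraMap_eq_smul_one, mul_smul_comm, mul_one, smul_mul_assoc]

lemma proj_norm_le_one [NormedRing A] [StarRing A] [CStarRing A]
    (e : A) (he : star e = e) (he2 : e * e = e) : ‖e‖ ≤ 1 := by
  have h := CStarRing.norm_star_mul_self (x := e)
  rw [he, he2] at h
  nlinarith [norm_nonneg e]

end AuxCStar

set_option maxHeartbeats 1000000 in
theorem stmt_0 {A : Type*} [NormedRing A] [StarRing A] [CStarRing A]
    [NormedAlgebra ℂ A] [StarModule ℂ A] [CompleteSpace A]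
    (p q : A) (hp : IsSelfAdjoint p) (hp2 : IsIdempotentElem p)
    (hq : IsSelfAdjoint q) (hq2 : IsIdempotentElem q)
    (ε : ℝ) (hε0 : 0 < ε) (hε4 : ε < 1 / 4)
    (h : ‖q * p - p * q‖ < ε) :
    ∃ q' : A, IsSelfAdjoint q' ∧ IsIdempotentElem q' ∧
      ‖q' - q‖ < 3 * ε ∧ q' * p = p * q' := by
  obtain hS | hS := subsingleton_or_nontrivial A
  · exact ⟨q, hq, hq2, by rw [sub_self, norm_zero]; positivity, Subsingleton.elim _ _⟩
  letI : CStarAlgebra A := ⟨⟩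
  letI := CStarAlgebra.spectralOrder A
  letI := CStarAlgebra.spectralOrderedRing A
  have hpp : p * p = p := hp2
  have hqq : q * q = q := hq2
  have hpp' : ∀ y : A, p * (p * y) = p * y := fun y => by rw [← mul_assoc, hpp]
  have hqq' : ∀ y : A, q * (q * y) = q * y := fun y => by rw [← mul_assoc, hqq]
  set p' : A := 1 - p with hp'def
  set c : A := q * p - p * q with hcdef
  set m : ℝ := ‖c‖ with hmdef
  have hm0 : 0 ≤ m := norm_nonneg c
  have hmε : m < ε := h
  have hp's : star p' = p' := by simp [hp'def, hp.star_eq]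
  have hp'p' : p' * p' = p' := by
    simp only [hp'def, mul_sub, sub_mul, mul_one, one_mul, hpp]; abel
  have hnp : ‖p‖ ≤ 1 := proj_norm_le_one p hp.star_eq hpp
  have hnp' : ‖p'‖ ≤ 1 := proj_norm_le_one p' hp's hp'p'
  have hcs : star c = -c := by
    simp [hcdef, star_sub, star_mul, hp.star_eq, hq.star_eq]
  set x : A := p * q * p + p' * q * p' with hxdef
  have hx : IsSelfAdjoint x := by
    rw [IsSelfAdjoint]
    simp [hxdef, star_add, star_mul, hp.star_eq, hq.star_eq, hp's, mul_assoc]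
  have hxp : x * p = p * x := by
    simp only [hxdef, hp'def, hcdef, mul_add, add_mul, mul_sub, sub_mul, mul_one, one_mul,
      mul_assoc, hpp, hqq, hpp', hqq']
    try abel
  -- bound ‖x - q‖ ≤ m
  set u : A := p * c * p' with hudef
  set v : A := p' * c * p with hvdef
  have hsu : star u = p' * (p * q - q * p) * p := by
    simp only [hudef]
    simp [star_mul, hp.star_eq, hq.star_eq, hp's, hcs, hcdef, mul_assoc, neg_sub, mul_sub, sub_mul]
  have hsv : star v = p * (p * q - q * p) * p' := by
    simp only [hvdef]
    simp [star_mul, hp.star_eq, hq.star_eq, hp's, hcs, hcdef, mul_assoc, neg_sub, mul_sub, sub_mul]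
  have hd : IsSelfAdjoint (x - q) := hx.sub hq
  have I3 : (x - q) * (x - q) = u * star u + v * star v := by
    rw [hsu, hsv]
    simp only [hxdef, hp'def, hcdef, hudef, hvdef, mul_add, add_mul, mul_sub, sub_mul,
      mul_one, one_mul, mul_assoc, hpp, hqq, hpp', hqq']
    try abel
  have hnu : ‖u‖ ≤ m := by
    calc ‖u‖ ≤ ‖p * c‖ * ‖p'‖ := norm_mul_le _ _
      _ ≤ ‖p‖ * ‖c‖ * ‖p'‖ := by
          gcongr
          exact norm_mul_le _ _
      _ ≤ 1 * m * 1 := by gcongr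
      _ = m := by ring
  have hnv : ‖v‖ ≤ m := by
    calc ‖v‖ ≤ ‖p' * c‖ * ‖p‖ := norm_mul_le _ _
      _ ≤ ‖p'‖ * ‖c‖ * ‖p‖ := by
          gcongr
          exact norm_mul_le _ _
      _ ≤ 1 * m * 1 := by gcongr
      _ = m := by ring
  have huu : u * star u ≤ (m * m) • (p * p) := by
    refine corner_le p _ hp.star_eq (IsSelfAdjoint.mul_star_self u) ?_ ?_
    · rw [hsu]
      simp only [hp'def, hcdef, hudef, mul_add, add_mul, mul_sub, sub_mul,
        mul_one, one_mul, mul_assoc, hpp, hqq, hpp', hqq']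
      try abel
    · calc ‖u * star u‖ = ‖u‖ * ‖u‖ := CStarRing.norm_self_mul_star
        _ ≤ m * m := by gcongr <;> simp [hnu, norm_nonneg]
  have hvv : v * star v ≤ (m * m) • (p' * p') := by
    refine corner_le p' _ hp's (IsSelfAdjoint.mul_star_self v) ?_ ?_
    · rw [hsv]
      simp only [hp'def, hcdef, hvdef, mul_add, add_mul, mul_sub, sub_mul,
        mul_one, one_mul, mul_assoc, hpp, hqq, hpp', hqq']
      try abel
    · calc ‖v * star v‖ = ‖v‖ * ‖v‖ := CStarRing.norm_self_mul_star
        _ ≤ m * m := by gcongr <;> simp [hnv, norm_nonneg]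
  have hdd : (x - q) * (x - q) ≤ algebraMap ℝ A (m * m) := by
    rw [I3, Algebra.algebraMap_eq_smul_one]
    calc u * star u + v * star v ≤ (m * m) • (p * p) + (m * m) • (p' * p') :=
          add_le_add huu hvv
      _ = (m * m) • (1 : A) := by
          rw [hpp, hp'p', ← smul_add]
          congr 1
          simp [hp'def]
  have hddpos : (0 : A) ≤ (x - q) * (x - q) := by
    have := star_mul_self_nonneg (x - q)
    rwa [hd.star_eq] at this
  have hdnorm : ‖x - q‖ ≤ m := by
    have h1 : ‖(x - q) * (x - q)‖ ≤ m * m :=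
      (CStarAlgebra.norm_le_iff_le_algebraMap _ (by positivity) hddpos).mpr hdd
    have h2 : ‖(x - q) * (x - q)‖ = ‖x - q‖ * ‖x - q‖ := by
      have h3 := CStarRing.norm_star_mul_self (x := x - q)
      rwa [hd.star_eq] at h3
    nlinarith [norm_nonneg (x - q)]
  -- bound on x * x - x
  set y₁ : A := p * (q * c) * p with hy₁def
  set y₂ : A := p' * (q * c) * p' with hy₂def
  have I5 : x * x - x = y₂ - y₁ := by
    simp only [hxdef, hp'def, hcdef, hy₁def, hy₂def, mul_add, add_mul, mul_sub, sub_mul,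
      mul_one, one_mul, mul_assoc, hpp, hqq, hpp', hqq']
    try abel
  have hy₁sa : IsSelfAdjoint y₁ := by
    rw [IsSelfAdjoint]
    calc star y₁ = p * ((p * q - q * p) * q) * p := by
          simp only [hy₁def]
          simp [star_mul, hp.star_eq, hq.star_eq, hcs, hcdef, mul_assoc, neg_sub,
            mul_sub, sub_mul]
      _ = y₁ := by
          simp only [hy₁def, hcdef, mul_add, add_mul, mul_sub, sub_mul,
            mul_one, one_mul, mul_assoc, hpp, hqq, hpp', hqq']
          try abel
  have hy₂sa : IsSelfAdjoint y₂ := by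
    rw [IsSelfAdjoint]
    calc star y₂ = p' * ((p * q - q * p) * q) * p' := by
          simp only [hy₂def]
          simp [star_mul, hp.star_eq, hq.star_eq, hp's, hcs, hcdef, mul_assoc, neg_sub,
            mul_sub, sub_mul]
      _ = y₂ := by
          simp only [hy₂def, hp'def, hcdef, mul_add, add_mul, mul_sub, sub_mul,
            mul_one, one_mul, mul_assoc, hpp, hqq, hpp', hqq']
          try abel
  have hny₁ : ‖y₁‖ ≤ m := by
    calc ‖y₁‖ ≤ ‖p * (q * c)‖ * ‖p‖ := norm_mul_le _ _
      _ ≤ ‖p‖ * (‖q‖ * ‖c‖) * ‖p‖ := by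
          gcongr
          calc ‖p * (q * c)‖ ≤ ‖p‖ * ‖q * c‖ := norm_mul_le _ _
            _ ≤ ‖p‖ * (‖q‖ * ‖c‖) := by gcongr; exact norm_mul_le _ _
      _ ≤ 1 * (1 * m) * 1 := by
          gcongr
          exact proj_norm_le_one q hq.star_eq hqq
      _ = m := by ring
  have hny₂ : ‖y₂‖ ≤ m := by
    calc ‖y₂‖ ≤ ‖p' * (q * c)‖ * ‖p'‖ := norm_mul_le _ _
      _ ≤ ‖p'‖ * (‖q‖ * ‖c‖) * ‖p'‖ := by
          gcongr
          calc ‖p' * (q * c)‖ ≤ ‖p'‖ * ‖q * c‖ := norm_mul_le _ _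
            _ ≤ ‖p'‖ * (‖q‖ * ‖c‖) := by gcongr; exact norm_mul_le _ _
      _ ≤ 1 * (1 * m) * 1 := by
          gcongr
          exact proj_norm_le_one q hq.star_eq hqq
      _ = m := by ring
  have hy₁corner : p * y₁ * p = y₁ := by
    simp only [hy₁def, hcdef, mul_add, add_mul, mul_sub, sub_mul,
      mul_one, one_mul, mul_assoc, hpp, hqq, hpp', hqq']
    try abel
  have hy₂corner : p' * y₂ * p' = y₂ := by
    simp only [hy₂def, hp'def, hcdef, mul_add, add_mul, mul_sub, sub_mul,
      mul_one, one_mul, mul_assoc, hpp, hqq, hpp', hqq']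
    try abel
  have hxx : IsSelfAdjoint (x * x - x) := by
    rw [IsSelfAdjoint]
    simp [star_sub, star_mul, hx.star_eq]
  have hxxub : x * x - x ≤ algebraMap ℝ A m := by
    rw [I5, Algebra.algebraMap_eq_smul_one]
    have h1 : y₂ ≤ m • (p' * p') := corner_le p' y₂ hp's hy₂sa hy₂corner hny₂
    have h2 : -y₁ ≤ m • (p * p) := by
      refine corner_le p (-y₁) hp.star_eq hy₁sa.neg ?_ (by rw [norm_neg]; exact hny₁)
      rw [mul_neg, neg_mul, hy₁corner]
    calc y₂ - y₁ = y₂ + (-y₁) := by abel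
      _ ≤ m • (p' * p') + m • (p * p) := add_le_add h1 h2
      _ = m • (1 : A) := by
          rw [hpp, hp'p', ← smul_add]
          congr 1
          simp [hp'def]
  have hxxlb : -(algebraMap ℝ A m) ≤ x * x - x := by
    rw [I5, Algebra.algebraMap_eq_smul_one]
    have h1 : -y₂ ≤ m • (p' * p') := by
      refine corner_le p' (-y₂) hp's hy₂sa.neg ?_ (by rw [norm_neg]; exact hny₂)
      rw [mul_neg, neg_mul, hy₂corner]
    have h2 : y₁ ≤ m • (p * p) := corner_le p y₁ hp.star_eq hy₁sa hy₁corner hny₁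
    have h3 : -(y₂ - y₁) ≤ m • (1 : A) := by
      calc -(y₂ - y₁) = (-y₂) + y₁ := by abel
        _ ≤ m • (p' * p') + m • (p * p) := add_le_add h1 h2
        _ = m • (1 : A) := by
            rw [hpp, hp'p', ← smul_add]
            congr 1
            simp [hp'def]
    exact neg_le.mp h3
  -- spectrum bound
  have hcfc : cfc (fun t : ℝ => t * t - t) x = x * x - x := by
    calc cfc (fun t : ℝ => t * t - t) x
        = cfc (fun t : ℝ => t * t) x - cfc (fun t : ℝ => t) x :=
          cfc_sub (fun t : ℝ => t * t) (fun t : ℝ => t) x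
      _ = cfc (fun t : ℝ => t) x * cfc (fun t : ℝ => t) x - cfc (fun t : ℝ => t) x := by
          rw [cfc_mul (fun t : ℝ => t) (fun t : ℝ => t) x]
      _ = x * x - x := by rw [cfc_id' ℝ x]
  have habs : ∀ t ∈ spectrum ℝ x, |t * t - t| ≤ m := by
    intro t ht
    have hmem : t * t - t ∈ spectrum ℝ (x * x - x) := by
      rw [← hcfc, cfc_map_spectrum (fun t : ℝ => t * t - t) x]
      exact ⟨t, ht, rfl⟩
    have hub := (le_algebraMap_iff_spectrum_le (ha := hxx)).mp hxxub _ hmem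
    have hxxlb' : algebraMap ℝ A (-m) ≤ x * x - x := by rw [map_neg]; exact hxxlb
    have hlb := (algebraMap_le_iff_le_spectrum (ha := hxx)).mp hxxlb' _ hmem
    exact abs_le.mpr ⟨hlb, hub⟩
  have hgap : ∀ t ∈ spectrum ℝ x, t ≠ 1 / 2 := by
    intro t ht heq
    have := habs t ht
    rw [heq, show (1:ℝ)/2 * (1/2) - 1/2 = -(1/4) by norm_num, abs_neg,
      abs_of_nonneg (by norm_num)] at this
    linarith
  set f : ℝ → ℝ := fun t => if t < 1 / 2 then 0 else 1 with hfdef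
  have hfc : ContinuousOn f (spectrum ℝ x) := by
    intro t ht
    apply ContinuousAt.continuousWithinAt
    rcases (hgap t ht).lt_or_gt with h' | h'
    · have hev : f =ᶠ[nhds t] fun _ => (0 : ℝ) :=
        Filter.eventuallyEq_of_mem (Iio_mem_nhds h') fun s hs => if_pos hs
      exact hev.continuousAt
    · have hev : f =ᶠ[nhds t] fun _ => (1 : ℝ) :=
        Filter.eventuallyEq_of_mem (Ioi_mem_nhds h') fun s hs =>
          if_neg (not_lt.mpr (le_of_lt hs))
      exact hev.continuousAt
  set q' : A := cfc f x with hq'def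
  have hq'sa : IsSelfAdjoint q' := cfc_predicate f x
  have hq'idem : IsIdempotentElem q' := by
    show q' * q' = q'
    rw [hq'def, ← cfc_mul f f x hfc hfc]
    refine cfc_congr fun t _ => ?_
    simp only [hfdef]
    split_ifs <;> norm_num
  have hq'x : ‖q' - x‖ ≤ 2 * m := by
    have h5 : cfc (fun t : ℝ => f t - t) x = q' - x := by
      rw [cfc_sub f (fun t : ℝ => t) x hfc (by fun_prop), cfc_id' ℝ x]
    rw [hq'def] at h5 ⊢
    rw [← h5]
    refine norm_cfc_le (by positivity) fun t ht => ?_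
    have h6 := abs_le.mp (habs t ht)
    obtain ⟨h6l, h6r⟩ := h6
    rw [Real.norm_eq_abs, abs_le]
    rcases lt_or_ge t (1 / 2) with h' | h'
    · have hf0 : f t = 0 := by simp only [hfdef]; rw [if_pos h']
      rw [hf0]
      rcases le_or_gt t 0 with h'' | h''
      · constructor <;> nlinarith [sq_nonneg t]
      · constructor <;> nlinarith [mul_nonneg h''.le (by linarith : (0:ℝ) ≤ 1 - 2 * t)]
    · have hf1 : f t = 1 := by simp only [hfdef]; rw [if_neg (not_lt.mpr h')]
      rw [hf1]
      rcases le_or_gt t 1 with h'' | h''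
      · constructor <;>
          nlinarith [mul_nonneg (by linarith : (0:ℝ) ≤ 2 * t - 1) (by linarith : (0:ℝ) ≤ 1 - t)]
      · constructor <;> nlinarith [sq_nonneg (t - 1)]
  -- commutation
  set u₀ : A := p + p - 1 with hu₀def
  have hu₀1 : u₀ * u₀ = 1 := by
    simp only [hu₀def, mul_add, add_mul, mul_sub, sub_mul, mul_one, one_mul, mul_assoc,
      hpp, hpp']
    abel
  have hu₀s : star u₀ = u₀ := by simp [hu₀def, hp.star_eq]
  have hu₀x : u₀ * x * u₀ = x := by
    have h7 : u₀ * x = x * u₀ := by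
      simp only [hu₀def, add_mul, sub_mul, mul_add, mul_sub, one_mul, mul_one, hxp]
    rw [h7, mul_assoc, hu₀1, mul_one]
  letI : CompactSpace (spectrum ℝ x) :=
    isCompact_iff_compactSpace.mp (ContinuousFunctionalCalculus.isCompact_spectrum x)
  have hφx : (conjSAH u₀ hu₀1 hu₀s) x = x := by rw [conjSAH_apply]; exact hu₀x
  have hmap := StarAlgHom.map_cfc (conjSAH u₀ hu₀1 hu₀s) f x hfc
    (conjSAH_cont u₀ hu₀1 hu₀s) hx (by rw [hφx]; exact hx)
  rw [hφx] at hmap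
  have h8 : u₀ * q' * u₀ = q' := by
    conv_rhs => rw [hq'def, ← hmap, conjSAH_apply]
  have h9 : u₀ * q' = q' * u₀ := by
    calc u₀ * q' = u₀ * q' * (u₀ * u₀) := by rw [hu₀1, mul_one]
      _ = (u₀ * q' * u₀) * u₀ := by rw [mul_assoc, mul_assoc, mul_assoc]
      _ = q' * u₀ := by rw [h8]
  have hcomm : q' * p = p * q' := by
    have h10 : p * q' + p * q' = q' * p + q' * p := by
      have := h9
      simp only [hu₀def, add_mul, sub_mul, mul_add, mul_sub, one_mul, mul_one] at this
      -- this : p * q' + p * q' - q' = q' * p + q' * p - q'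
      have h11 : p * q' + p * q' - q' + q' = q' * p + q' * p - q' + q' := by rw [this]
      simpa using h11
    have h12 : (2 : ℂ) • (p * q') = (2 : ℂ) • (q' * p) := by
      rw [two_smul, two_smul, h10]
    exact (smul_right_injective A (two_ne_zero) h12).symm
  refine ⟨q', hq'sa, hq'idem, ?_, hcomm⟩
  have h13 : ‖q' - q‖ ≤ ‖q' - x‖ + ‖x - q‖ := by
    have := norm_add_le (q' - x) (x - q)
    simpa using this
  have : ‖q' - q‖ ≤ 3 * m := by linarith
  linarith
end

section
/- Let H be a Hilbert space and P an orthogonal projection on H. For any bounded operator T on H, ‖PT − TP‖ = max(‖(1 − P)TP‖, ‖PT(1 − P)‖). -/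
open scoped ComplexInnerProductSpace
open ContinuousLinearMap in
private lemma proj_apply_norm_le {H : Type*} [NormedAddCommGroup H] [InnerProductSpace ℂ H]
    [CompleteSpace H] (P : H →L[ℂ] H) (hP : IsSelfAdjoint P) (hP2 : IsIdempotentElem P)
    (x : H) : ‖P x‖ ≤ ‖x‖ := by
  have hPP : P (P x) = P x := by
    rw [← ContinuousLinearMap.mul_apply, hP2.eq]
  have key : (⟪P x, P x⟫ : ℂ) = ⟪x, P x⟫ := by
    calc (⟪P x, P x⟫ : ℂ) = ⟪ContinuousLinearMap.adjoint P x, P x⟫ := by rw [hP.adjoint_eq]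
    _ = ⟪x, P (P x)⟫ := ContinuousLinearMap.adjoint_inner_left P (P x) x
    _ = ⟪x, P x⟫ := by rw [hPP]
  have h1 : ‖P x‖ ^ 2 = RCLike.re (⟪x, P x⟫ : ℂ) := by
    rw [← key, inner_self_eq_norm_sq (𝕜 := ℂ)]
  have h2 : RCLike.re (⟪x, P x⟫ : ℂ) ≤ ‖x‖ * ‖P x‖ := by
    calc RCLike.re (⟪x, P x⟫ : ℂ) ≤ ‖(⟪x, P x⟫ : ℂ)‖ := RCLike.re_le_norm _
    _ ≤ ‖x‖ * ‖P x‖ := norm_inner_le_norm x (P x)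
  nlinarith [norm_nonneg (P x), norm_nonneg x]

theorem stmt_7 {H : Type*} [NormedAddCommGroup H] [InnerProductSpace ℂ H] [CompleteSpace H]
    (P : H →L[ℂ] H) (hP : IsSelfAdjoint P) (hP2 : IsIdempotentElem P)
    (T : H →L[ℂ] H) :
    ‖P * T - T * P‖ = max ‖(1 - P) * T * P‖ ‖P * T * (1 - P)‖ := by
  set Q : H →L[ℂ] H := 1 - P with hQ
  have hQsa : IsSelfAdjoint Q := (IsSelfAdjoint.one (H →L[ℂ] H)).sub hP
  have hQ2 : IsIdempotentElem Q := hP2.one_sub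
  have hPapp : ∀ x, ‖P x‖ ≤ ‖x‖ := proj_apply_norm_le P hP hP2
  have hQapp : ∀ x, ‖Q x‖ ≤ ‖x‖ := proj_apply_norm_le Q hQsa hQ2
  set A : H →L[ℂ] H := P * T - T * P with hA
  have hPQ : P * Q = 0 := by
    rw [hQ, mul_sub, mul_one, hP2.eq, sub_self]
  have hQP : Q * P = 0 := by
    rw [hQ, sub_mul, one_mul, hP2.eq, sub_self]
  have horth : ∀ u v : H, (⟪P u, Q v⟫ : ℂ) = 0 := by
    intro u v
    calc (⟪P u, Q v⟫ : ℂ) = ⟪ContinuousLinearMap.adjoint P u, Q v⟫ := by rw [hP.adjoint_eq]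
    _ = ⟪u, P (Q v)⟫ := ContinuousLinearMap.adjoint_inner_left P (Q v) u
    _ = ⟪u, (P * Q) v⟫ := rfl
    _ = 0 := by rw [hPQ]; simp
  have key1 : Q * A * P = -(Q * T * P) := by
    have h : Q * (P * T - T * P) * P = Q * P * T * P - Q * T * (P * P) := by noncomm_ring
    rw [hA, h, hQP, hP2.eq]
    simp
  have key2 : P * A * Q = P * T * Q := by
    have h : P * (P * T - T * P) * Q = P * P * T * Q - P * T * (P * Q) := by noncomm_ring
    rw [hA, h, hPQ, hP2.eq]
    simp
  apply le_antisymm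
  · -- ‖A‖ ≤ max
    set M := max ‖Q * T * P‖ ‖P * T * Q‖ with hM
    have hM0 : 0 ≤ M := le_trans (norm_nonneg _) (le_max_left _ _)
    apply ContinuousLinearMap.opNorm_le_bound _ hM0
    intro x
    have hdecomp : A x = P (T (Q x)) - Q (T (P x)) := by
      have h : A = P * T * Q - Q * T * P := by
        rw [hA, hQ]; noncomm_ring
      rw [h]; rfl
    have hQQ : Q (Q x) = Q x := by rw [← ContinuousLinearMap.mul_apply, hQ2.eq]
    have hPP : P (P x) = P x := by rw [← ContinuousLinearMap.mul_apply, hP2.eq]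
    have hPM : ‖P * T * Q‖ ≤ M := le_max_right _ _
    have hQM : ‖Q * T * P‖ ≤ M := le_max_left _ _
    have h1 : ‖P (T (Q x))‖ ≤ M * ‖Q x‖ := by
      calc ‖P (T (Q x))‖ = ‖(P * T * Q) (Q x)‖ := by
            show _ = ‖P (T (Q (Q x)))‖; rw [hQQ]
      _ ≤ ‖P * T * Q‖ * ‖Q x‖ := ContinuousLinearMap.le_opNorm _ _
      _ ≤ M * ‖Q x‖ := mul_le_mul_of_nonneg_right hPM (norm_nonneg _)
    have h2 : ‖Q (T (P x))‖ ≤ M * ‖P x‖ := by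
      calc ‖Q (T (P x))‖ = ‖(Q * T * P) (P x)‖ := by
            show _ = ‖Q (T (P (P x)))‖; rw [hPP]
      _ ≤ ‖Q * T * P‖ * ‖P x‖ := ContinuousLinearMap.le_opNorm _ _
      _ ≤ M * ‖P x‖ := mul_le_mul_of_nonneg_right hQM (norm_nonneg _)
    have hpyth : ‖A x‖ ^ 2 = ‖P (T (Q x))‖ ^ 2 + ‖Q (T (P x))‖ ^ 2 := by
      rw [hdecomp, norm_sub_sq (𝕜 := ℂ), horth]
      simp
    have hpyth2 : ‖P x‖ ^ 2 + ‖Q x‖ ^ 2 = ‖x‖ ^ 2 := by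
      have hx : P x + Q x = x := by simp [hQ]
      calc ‖P x‖ ^ 2 + ‖Q x‖ ^ 2 = ‖P x + Q x‖ ^ 2 := by
            rw [norm_add_sq (𝕜 := ℂ), horth]; simp
      _ = ‖x‖ ^ 2 := by rw [hx]
    have e1 : ‖P (T (Q x))‖ ^ 2 ≤ (M * ‖Q x‖) ^ 2 :=
      pow_le_pow_left₀ (norm_nonneg _) h1 2
    have e2 : ‖Q (T (P x))‖ ^ 2 ≤ (M * ‖P x‖) ^ 2 :=
      pow_le_pow_left₀ (norm_nonneg _) h2 2
    have hsq : ‖A x‖ ^ 2 ≤ (M * ‖x‖) ^ 2 := by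
      calc ‖A x‖ ^ 2 = ‖P (T (Q x))‖ ^ 2 + ‖Q (T (P x))‖ ^ 2 := hpyth
      _ ≤ (M * ‖Q x‖) ^ 2 + (M * ‖P x‖) ^ 2 := add_le_add e1 e2
      _ = M ^ 2 * (‖P x‖ ^ 2 + ‖Q x‖ ^ 2) := by ring
      _ = M ^ 2 * ‖x‖ ^ 2 := by rw [hpyth2]
      _ = (M * ‖x‖) ^ 2 := by ring
    exact (pow_le_pow_iff_left₀ (norm_nonneg _) (mul_nonneg hM0 (norm_nonneg x)) two_ne_zero).mp hsq
  · apply max_le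
    · have h : ‖Q * T * P‖ = ‖Q * A * P‖ := by rw [key1, norm_neg]
      rw [h]
      apply ContinuousLinearMap.opNorm_le_bound _ (norm_nonneg A)
      intro x
      calc ‖(Q * A * P) x‖ = ‖Q (A (P x))‖ := rfl
      _ ≤ ‖A (P x)‖ := hQapp _
      _ ≤ ‖A‖ * ‖P x‖ := ContinuousLinearMap.le_opNorm _ _
      _ ≤ ‖A‖ * ‖x‖ := mul_le_mul_of_nonneg_left (hPapp x) (norm_nonneg A)
    · have h : ‖P * T * Q‖ = ‖P * A * Q‖ := by rw [key2]
      rw [h]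
      apply ContinuousLinearMap.opNorm_le_bound _ (norm_nonneg A)
      intro x
      calc ‖(P * A * Q) x‖ = ‖P (A (Q x))‖ := rfl
      _ ≤ ‖A (Q x)‖ := hPapp _
      _ ≤ ‖A‖ * ‖Q x‖ := ContinuousLinearMap.le_opNorm _ _
      _ ≤ ‖A‖ * ‖x‖ := mul_le_mul_of_nonneg_left (hQapp x) (norm_nonneg A)
end

section
/- Let ξ₁,…,ξₙ be unit vectors in a Hilbert space with |⟨ξᵢ, ξⱼ⟩| < δ for all i ≠ j, where δ is sufficiently small (e.g. δ < 1/(4n²)). Then the Gram–Schmidt orthonormalization ξ̃₁,…,ξ̃ₙ of ξ₁,…,ξₙ satisfies ‖ξ̃ⱼ − ξⱼ‖ ≤ C(n)δ for an explicit constant C(n) depending only on n. -/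
set_option maxHeartbeats 1000000

open Finset InnerProductSpace in
theorem stmt_12 {H : Type*} [NormedAddCommGroup H] [InnerProductSpace ℂ H] [CompleteSpace H]
    (n : ℕ) (hn : 0 < n) :
    ∃ C : ℝ, 0 < C ∧
      ∀ (ξ : ℕ → H) (δ : ℝ), 0 < δ → δ < 1 / (4 * (n : ℝ) ^ 2) →
        (∀ j < n, ‖ξ j‖ = 1) →
        (∀ i < n, ∀ j < n, i ≠ j → ‖(inner ℂ (ξ i) (ξ j) : ℂ)‖ < δ) →
        ∀ j < n, ‖InnerProductSpace.gramSchmidtNormed ℂ ξ j - ξ j‖ ≤ C * δ := by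
  have hn1 : (1:ℝ) ≤ (n:ℝ) := by exact_mod_cast hn
  refine ⟨3 * n, by positivity, ?_⟩
  intro ξ δ hδ hδn hnorm hinner
  set u : ℕ → H := gramSchmidt ℂ ξ with hu
  set v : ℕ → H := gramSchmidtNormed ℂ ξ with hv
  have hδn' : δ * (4 * (n:ℝ) ^ 2) < 1 := by
    rw [lt_div_iff₀ (by positivity)] at hδn; linarith
  have hδ1 : δ < 1 := by nlinarith
  have hnδ : (n:ℝ) * (4 * δ ^ 2) ≤ δ := by nlinarith
  have hvdef : ∀ k, v k = ((‖u k‖ : ℂ))⁻¹ • u k := fun k => rfl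
  -- main induction
  have key : ∀ i, i < n →
      (‖u i - ξ i‖ ^ 2 ≤ (n:ℝ) * (4 * δ ^ 2) ∧ 1 - δ ≤ ‖u i‖ ∧ ‖u i‖ ≤ 1) ∧
      ∀ j, i < j → j < n → ‖(inner ℂ (v i) (ξ j) : ℂ)‖ ≤ 2 * δ := by
    intro i
    induction i using Nat.strong_induction_on with
    | _ i IH =>
    intro hi
    have hprev : ∀ k, k < i → (1 - δ ≤ ‖u k‖ ∧ ‖u k‖ ≤ 1) ∧
        ‖(inner ℂ (v k) (ξ i) : ℂ)‖ ≤ 2 * δ := by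
      intro k hk
      obtain ⟨⟨_, h2⟩, h3⟩ := IH k hk (hk.trans hi)
      exact ⟨h2, h3 i hk hi⟩
    have hupos : ∀ k, k < i → (0:ℝ) < ‖u k‖ := by
      intro k hk
      have := (hprev k hk).1.1
      linarith
    have hvnorm : ∀ k, k < i → ‖v k‖ = 1 := by
      intro k hk
      rw [hvdef k, norm_smul, norm_inv, Complex.norm_real,
        Real.norm_of_nonneg (norm_nonneg _), inv_mul_cancel₀ (hupos k hk).ne']
    have horth : ∀ k, k < i → ∀ l, l < i → k ≠ l → (inner ℂ (v k) (v l) : ℂ) = 0 := by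
      intro k _ l _ hkl
      rw [hvdef k, hvdef l, inner_smul_left, inner_smul_right,
        gramSchmidt_orthogonal ℂ ξ hkl, mul_zero, mul_zero]
    set c : ℕ → ℂ := fun k => (inner ℂ (v k) (ξ i) : ℂ) with hc
    -- the Gram-Schmidt formula
    have hterm : ∀ k ∈ Iio i, ((inner ℂ (u k) (ξ i) : ℂ) / ((‖u k‖:ℂ)) ^ 2) • u k = c k • v k := by
      intro k hk
      have hk' := mem_Iio.mp hk
      have hukn : ((‖u k‖:ℂ)) ≠ 0 := by
        exact_mod_cast (Complex.ofReal_ne_zero.mpr (hupos k hk').ne')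
      show _ = (inner ℂ (v k) (ξ i) : ℂ) • v k
      rw [hvdef k, inner_smul_left, smul_smul, map_inv₀, Complex.conj_ofReal]
      congr 1
      rw [div_eq_mul_inv, pow_two, mul_inv]
      ring
    have hui : u i = ξ i - ∑ k ∈ Iio i, c k • v k := by
      have h0 := gramSchmidt_def'' ℂ ξ i
      rw [← hu] at h0
      have hsum : ξ i - u i = ∑ k ∈ Iio i, c k • v k := by
        rw [h0, add_sub_cancel_left]
        exact Finset.sum_congr rfl hterm
      rw [← hsum]; abel
    set w : H := ∑ k ∈ Iio i, c k • v k with hw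
    have hcb : ∀ k ∈ Iio i, ‖c k‖ ≤ 2 * δ := fun k hk => (hprev k (mem_Iio.mp hk)).2
    -- norm of w
    have hvv : ∀ k, k < i → (inner ℂ (v k) w : ℂ) = c k := by
      intro k hk
      rw [hw, inner_sum]
      rw [Finset.sum_eq_single k]
      · rw [inner_smul_right, inner_self_eq_norm_sq_to_K, hvnorm k hk]
        norm_num
      · intro l hl hlk
        rw [inner_smul_right, horth k hk l (mem_Iio.mp hl) (Ne.symm hlk), mul_zero]
      · exact fun h => absurd (mem_Iio.mpr hk) h
    have hww : (inner ℂ w w : ℂ) = (RCLike.ofReal (∑ k ∈ Iio i, ‖c k‖ ^ 2) : ℂ) := by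
      nth_rewrite 1 [hw]
      rw [sum_inner, RCLike.ofReal_sum]
      refine Finset.sum_congr rfl fun k hk => ?_
      rw [inner_smul_left, hvv k (mem_Iio.mp hk), RCLike.conj_mul, RCLike.ofReal_pow]
    have hw2 : ‖w‖ ^ 2 = ∑ k ∈ Iio i, ‖c k‖ ^ 2 := by
      rw [inner_self_eq_norm_sq_to_K] at hww
      exact_mod_cast hww
    have hwb : ‖w‖ ^ 2 ≤ (n:ℝ) * (4 * δ ^ 2) := by
      rw [hw2]
      calc ∑ k ∈ Iio i, ‖c k‖ ^ 2 ≤ ∑ k ∈ Iio i, (2*δ)^2 := by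
            refine Finset.sum_le_sum fun k hk => ?_
            have := hcb k hk
            nlinarith [norm_nonneg (c k)]
        _ = (i:ℝ) * (2*δ)^2 := by rw [Finset.sum_const, Nat.card_Iio, nsmul_eq_mul]
        _ ≤ (n:ℝ) * (4 * δ^2) := by
            have : (i:ℝ) ≤ n := by exact_mod_cast hi.le
            nlinarith
    -- Pythagoras
    have horthw : (inner ℂ (u i) w : ℂ) = 0 := by
      rw [hw, inner_sum]
      refine Finset.sum_eq_zero fun k hk => ?_
      rw [inner_smul_right, hvdef k, inner_smul_right,
        gramSchmidt_orthogonal ℂ ξ (mem_Iio.mp hk).ne', mul_zero, mul_zero]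
    have hxi : ξ i = u i + w := by rw [hui]; abel
    have hpyth : 1 = ‖u i‖ ^ 2 + ‖w‖ ^ 2 := by
      have h1 : ‖ξ i‖ ^ 2 = ‖u i‖ ^ 2 + 2 * RCLike.re (inner ℂ (u i) w : ℂ) + ‖w‖ ^ 2 := by
        rw [hxi]; exact norm_add_sq _ _
      rw [horthw] at h1
      simp only [map_zero, mul_zero, add_zero] at h1
      rw [hnorm i hi] at h1
      nlinarith
    have hw0 : (0:ℝ) ≤ ‖w‖ ^ 2 := sq_nonneg _
    have hu2 : ‖u i‖ ^ 2 ≤ 1 := by linarith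
    have hub : ‖u i‖ ≤ 1 := by
      have h5 : |‖u i‖| ≤ 1 := (sq_le_one_iff_abs_le_one (a := ‖u i‖)).mp hu2
      rwa [abs_of_nonneg (norm_nonneg _)] at h5
    have hulb : 1 - δ ≤ ‖u i‖ := by
      have h4 : 1 - δ ≤ ‖u i‖ ^ 2 := by linarith
      nlinarith [norm_nonneg (u i)]
    have part1 : ‖u i - ξ i‖ ^ 2 ≤ (n:ℝ) * (4 * δ ^ 2) := by
      have hmw : u i - ξ i = -w := by rw [hui]; abel
      rw [hmw, norm_neg]; exact hwb
    refine ⟨⟨part1, hulb, hub⟩, ?_⟩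
    -- bound on inner products with later vectors
    intro j hij hjn
    have hn2 : (2:ℝ) ≤ (n:ℝ) := by
      have : 2 ≤ n := by omega
      exact_mod_cast this
    have hinner_uij : ‖(inner ℂ (u i) (ξ j) : ℂ)‖ ≤ δ + (n:ℝ) * (4 * δ^2) := by
      rw [hui, inner_sub_left, sum_inner]
      have h5 : ‖∑ k ∈ Iio i, (inner ℂ (c k • v k) (ξ j) : ℂ)‖ ≤ (n:ℝ) * (4 * δ^2) := by
        calc ‖∑ k ∈ Iio i, (inner ℂ (c k • v k) (ξ j) : ℂ)‖
            ≤ ∑ k ∈ Iio i, ‖(inner ℂ (c k • v k) (ξ j) : ℂ)‖ := norm_sum_le _ _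
          _ ≤ ∑ k ∈ Iio i, (2*δ)*(2*δ) := by
              refine Finset.sum_le_sum fun k hk => ?_
              have hk' := mem_Iio.mp hk
              rw [inner_smul_left, norm_mul, RCLike.norm_conj]
              have h6 : ‖(inner ℂ (v k) (ξ j) : ℂ)‖ ≤ 2*δ :=
                ((IH k hk' (hk'.trans hi)).2) j (hk'.trans hij) hjn
              have h7 := hcb k hk
              have h8 := norm_nonneg (c k)
              have h9 := norm_nonneg (inner ℂ (v k) (ξ j) : ℂ)
              nlinarith
          _ = (i:ℝ) * ((2*δ)*(2*δ)) := by rw [Finset.sum_const, Nat.card_Iio, nsmul_eq_mul]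
          _ ≤ (n:ℝ) * (4 * δ^2) := by
              have : (i:ℝ) ≤ n := by exact_mod_cast hi.le
              nlinarith
      calc ‖(inner ℂ (ξ i) (ξ j) : ℂ) - ∑ k ∈ Iio i, (inner ℂ (c k • v k) (ξ j) : ℂ)‖
          ≤ ‖(inner ℂ (ξ i) (ξ j) : ℂ)‖ + ‖∑ k ∈ Iio i, (inner ℂ (c k • v k) (ξ j) : ℂ)‖ :=
            norm_sub_le _ _
        _ ≤ δ + (n:ℝ) * (4 * δ^2) := by
            have := hinner i hi j hjn (Nat.ne_of_lt hij)
            linarith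
    have hvij : ‖(inner ℂ (v i) (ξ j) : ℂ)‖ = ‖u i‖⁻¹ * ‖(inner ℂ (u i) (ξ j) : ℂ)‖ := by
      rw [hvdef i, inner_smul_left, norm_mul, RCLike.norm_conj, norm_inv,
        Complex.norm_real, Real.norm_of_nonneg (norm_nonneg _)]
    rw [hvij]
    have hupos' : (0:ℝ) < ‖u i‖ := by linarith
    rw [inv_mul_le_iff₀ hupos']
    calc ‖(inner ℂ (u i) (ξ j) : ℂ)‖ ≤ δ + (n:ℝ) * (4 * δ^2) := hinner_uij
      _ ≤ 2 * δ * (1 - δ) := by nlinarith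
      _ ≤ ‖u i‖ * (2 * δ) := by nlinarith
  -- conclude
  intro j hjn
  obtain ⟨⟨h1, h2, h3⟩, _⟩ := key j hjn
  have hujpos : (0:ℝ) < ‖u j‖ := by linarith
  have hd1 : ‖u j - ξ j‖ ≤ 2 * n * δ := by
    have h4 : ‖u j - ξ j‖ ^ 2 ≤ (2 * n * δ)^2 := by nlinarith
    nlinarith [norm_nonneg (u j - ξ j), mul_pos (mul_pos (by norm_num : (0:ℝ) < 2)
      (by positivity : (0:ℝ) < (n:ℝ))) hδ]
  have hd2 : ‖v j - u j‖ ≤ δ := by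
    have hvu : v j - u j = (((‖u j‖:ℂ))⁻¹ - 1) • u j := by
      rw [hvdef j, sub_smul, one_smul]
    rw [hvu, norm_smul]
    have hre : ((‖u j‖:ℂ))⁻¹ - 1 = ((‖u j‖⁻¹ - 1 : ℝ) : ℂ) := by push_cast; ring
    rw [hre, Complex.norm_real, Real.norm_eq_abs]
    have habs : |‖u j‖⁻¹ - 1| * ‖u j‖ = |1 - ‖u j‖| := by
      rw [← abs_of_pos hujpos, ← abs_mul]
      congr 1
      field_simp
      rw [abs_of_pos hujpos]; ring
    rw [habs, abs_of_nonneg (by linarith)]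
    linarith
  calc ‖v j - ξ j‖ ≤ ‖v j - u j‖ + ‖u j - ξ j‖ := by
        have h5 : v j - ξ j = (v j - u j) + (u j - ξ j) := by abel
        rw [h5]; exact norm_add_le _ _
    _ ≤ δ + 2 * n * δ := by linarith
    _ ≤ 3 * n * δ := by nlinarith
end
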